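/- Let (a_{n,k})_{1≤k≤n} and (b_{n,k})_{1≤k≤n} be two triangular arrays in [0,∞), and let μ_n := n^{-1} Σ_{k=1}^n δ_{a_{n,k}} and ν_n := n^{-1} Σ_{k=1}^n δ_{b_{n,k}}. Suppose that for all sufficiently large n: (i) a_{n,1} ≥ ⋯ ≥ a_{n,n} and b_{n,1} ≥ ⋯ ≥ b_{n,n}; (ii) ∏_{i=1}^k a_{n,i} ≤ ∏_{i=1}^k b_{n,i} for every 1 ≤ k ≤ n; (iii) ∏_{i=k}^n b_{n,i} ≤ ∏_{i=k}^n a_{n,i} for every 1 ≤ k ≤ n; and moreover (iv) (ν_n)_{n≥1} converges weakly to some probability measure ν; (v) log(·) is uniformly integrable for (ν_n)_{n≥1}. Then: (j) the sequence (μ_n)_{n≥1} is tight; (jj) log(·) is uniformly integrable for (μ_n)_{n≥1}; (jjj) ∫_0^∞ log(t) dμ_n(dt) = ∫_0^∞ log(t) dν_n(dt) for all sufficiently large n, and this common value converges to ∫_0^∞ log(t) dν(dt) as n → ∞. In particular, every weak adherence value μ of (μ_n)_{n≥1} satisfies ∫_0^∞ log(t) dμ(dt) = ∫_0^∞ log(t)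 dν(dt). -/

import Mathlib

open MeasureTheory Filter Topology
open scoped ENNReal

noncomputable section

/-- Empirical measure of the first `n` values of `f`. -/
def empMeas (f : ℕ → ℝ) (n : ℕ) : Measure ℝ :=
  (n : ℝ≥0∞)⁻¹ • ∑ k ∈ Finset.range n, Measure.dirac (f k)

/-- `|log s|` with value `∞` at `s = 0`. -/
def logAbsE (s : ℝ) : ℝ≥0∞ := if s = 0 then ⊤ else ENNReal.ofReal |Real.log s|

/-- `log` is uniformly integrable for the sequence of measures `η`:
`lim_{t→∞} limsup_n ∫_{{|log| > t}} |log| dη_n = 0`. -/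
def UnifIntLog (η : ℕ → Measure ℝ) : Prop :=
  Tendsto (fun t : ℝ =>
      limsup (fun n => ∫⁻ s in {s : ℝ | ENNReal.ofReal t < logAbsE s}, logAbsE s ∂(η n)) atTop)
    atTop (𝓝 (0 : ℝ≥0∞))

lemma measurable_logAbsE : Measurable logAbsE := by
  unfold logAbsE
  exact Measurable.ite (MeasurableSet.singleton 0) measurable_const
    ((ENNReal.measurable_ofReal).comp (Real.measurable_log.abs))

lemma lintegral_empMeas (f : ℕ → ℝ) (n : ℕ) (g : ℝ → ℝ≥0∞) :
    ∫⁻ x, g x ∂(empMeas f n) = (n : ℝ≥0∞)⁻¹ * ∑ k ∈ Finset.range n, g (f k) := by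
  rw [empMeas, lintegral_smul_measure, lintegral_finset_sum_measure]
  simp [lintegral_dirac]

lemma integrable_empMeas (f : ℕ → ℝ) (n : ℕ) (g : ℝ → ℝ) : Integrable g (empMeas f n) := by
  rcases Nat.eq_zero_or_pos n with hn | hn
  · subst hn; simp [empMeas]
  rw [empMeas]
  refine Integrable.smul_measure ?_ (by simp [Nat.pos_iff_ne_zero.mp hn])
  refine integrable_finset_sum_measure.2 fun k _ => ?_
  exact (integrable_congr (ae_eq_dirac g)).2 (integrable_const _)

lemma integral_empMeas (f : ℕ → ℝ) (n : ℕ) (g : ℝ → ℝ) :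
    ∫ x, g x ∂(empMeas f n) = (n : ℝ)⁻¹ * ∑ k ∈ Finset.range n, g (f k) := by
  rw [empMeas, integral_smul_measure, integral_finset_sum_measure
    (fun k _ => (integrable_congr (ae_eq_dirac g)).2 (integrable_const _))]
  simp [integral_dirac, ENNReal.toReal_inv, smul_eq_mul]

instance : MeasureTheory.IsFiniteMeasure (Measure.dirac (0:ℝ)) := inferInstance

lemma isProbabilityMeasure_empMeas (f : ℕ → ℝ) (n : ℕ) (hn : n ≠ 0) :
    IsProbabilityMeasure (empMeas f n) := by
  constructor
  rw [empMeas]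
  simp only [Measure.smul_apply, Measure.coe_finset_sum, Finset.sum_apply, smul_eq_mul]
  rw [Finset.sum_congr rfl fun k _ => measure_univ]
  simp [Finset.card_range]
  rw [ENNReal.inv_mul_cancel (by exact_mod_cast hn) (by simp)]

def clampLog (M : ℝ) : ℝ → ℝ := fun t => max (-M) (min M (Real.log (max |t| (Real.exp (-M)))))

lemma continuous_clampLog (M : ℝ) : Continuous (clampLog M) := by
  unfold clampLog
  refine continuous_const.max (continuous_const.min ?_)
  have h1 : Continuous fun t : ℝ => max |t| (Real.exp (-M)) := continuous_abs.max continuous_const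
  refine Real.continuousOn_log.comp_continuous h1 fun t => ?_
  exact ne_of_gt ((Real.exp_pos (-M)).trans_le (le_max_right |t| _))

lemma clampLog_of_ne (M : ℝ) (hM : 0 ≤ M) {s : ℝ} (hs : s ≠ 0) :
    clampLog M s = max (-M) (min M (Real.log s)) := by
  have habs : 0 < |s| := abs_pos.2 hs
  unfold clampLog
  rcases le_total (Real.exp (-M)) |s| with h | h
  · rw [max_eq_left h, Real.log_abs]
  · rw [max_eq_right h, Real.log_exp]
    have hx : Real.log s ≤ -M := by
      rw [← Real.log_abs, ← Real.log_exp (-M)]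
      exact Real.log_le_log habs h
    have h1 : -M ≤ M := neg_le_self hM
    rw [min_eq_right h1, min_eq_right (hx.trans h1), max_eq_left hx, max_self]

lemma clampLog_zero (M : ℝ) (hM : 0 ≤ M) : clampLog M 0 = -M := by
  unfold clampLog
  rw [abs_zero, max_eq_right (Real.exp_pos _).le, Real.log_exp,
    min_eq_right (neg_le_self hM), max_self]

lemma abs_clamp_eq (M x : ℝ) (hM : 0 ≤ M) : |max (-M) (min M x)| = min M |x| := by
  rcases le_total 0 x with hx | hx
  · rw [abs_of_nonneg hx, max_eq_right (le_trans (neg_nonpos.2 hM) (le_min hM hx)),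
      abs_of_nonneg (le_min hM hx)]
  · rw [abs_of_nonpos hx, min_eq_right (hx.trans hM)]
    rcases le_total (-M) x with h | h
    · rw [max_eq_right h, abs_of_nonpos hx, min_eq_right (neg_le.1 h)]
    · rw [max_eq_left h, abs_of_nonpos (neg_nonpos.2 hM), neg_neg,
        min_eq_left (le_neg.1 h)]

lemma abs_clampLog (M : ℝ) (hM : 0 ≤ M) (s : ℝ) (hs : s ≠ 0) :
    |clampLog M s| = min M |Real.log s| := by
  rw [clampLog_of_ne M hM hs, abs_clamp_eq M _ hM]

lemma abs_clampLog_le (M : ℝ) (hM : 0 ≤ M) (s : ℝ) : |clampLog M s| ≤ M := by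
  rcases eq_or_ne s 0 with rfl | hs
  · rw [clampLog_zero M hM, abs_neg, abs_of_nonneg hM]
  · rw [abs_clampLog M hM s hs]; exact min_le_left _ _

lemma clampLog_eq_log (M : ℝ) (hM : 0 ≤ M) {s : ℝ} (hs : s ≠ 0)
    (h : |Real.log s| ≤ M) : clampLog M s = Real.log s := by
  rw [clampLog_of_ne M hM hs, min_eq_right (le_of_abs_le h),
    max_eq_right (neg_le_of_abs_le h)]

lemma ofReal_abs_clampLog (M : ℝ) (hM : 0 ≤ M) (s : ℝ) :
    ENNReal.ofReal |clampLog M s| = logAbsE s ⊓ ENNReal.ofReal M := by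
  rcases eq_or_ne s 0 with rfl | hs
  · rw [clampLog_zero M hM, abs_neg, abs_of_nonneg hM]
    simp [logAbsE]
  · rw [abs_clampLog M hM s hs, logAbsE, if_neg hs, min_comm]
    have hmono : Monotone ENNReal.ofReal := fun _ _ h => ENNReal.ofReal_le_ofReal h
    exact hmono.map_min

lemma iSup_inf_natCast (x : ℝ≥0∞) : (⨆ M : ℕ, (x ⊓ (M : ℝ≥0∞))) = x := by
  refine le_antisymm (iSup_le fun _ => inf_le_left) ?_
  rw [le_iSup_iff]
  intro b hb
  by_contra hbx
  push_neg at hbx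
  have hbt : b ≠ ⊤ := fun h => by simp [h] at hbx
  obtain ⟨M, hM⟩ := ENNReal.exists_nat_gt hbt
  exact absurd (hb M) (not_le.2 (lt_inf_iff.2 ⟨hbx, hM⟩))

open Finset in
lemma filter_eq_range_of_lower (n : ℕ) (p : ℕ → Prop) [DecidablePred p]
    (hmono : ∀ i j : ℕ, i ≤ j → j < n → p j → p i) :
    ∃ j ≤ n, (Finset.range n).filter p = Finset.range j := by
  induction n with
  | zero => exact ⟨0, le_refl _, by simp⟩
  | succ n ih =>
    by_cases hp : p n
    · refine ⟨n + 1, le_refl _, ?_⟩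
      rw [Finset.filter_eq_self]
      intro i hi
      exact hmono i n (Nat.lt_succ_iff.1 (Finset.mem_range.1 hi)) (Nat.lt_succ_self n) hp
    · obtain ⟨j, hj, hS⟩ := ih (fun i j hij hjn => hmono i j hij (hjn.trans (Nat.lt_succ_self n)))
      refine ⟨j, hj.trans (Nat.le_succ n), ?_⟩
      rw [Finset.range_add_one, Finset.filter_insert, if_neg hp, hS]

open Finset in
lemma filter_eq_Ico_of_upper (n : ℕ) (p : ℕ → Prop) [DecidablePred p]
    (hmono : ∀ i j : ℕ, i ≤ j → j < n → p i → p j) :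
    ∃ j ≤ n, (Finset.range n).filter p = Finset.Ico j n := by
  obtain ⟨j, hj, hS⟩ := filter_eq_range_of_lower n (fun i => ¬ p i)
    (fun i j hij hjn hnpj hpi => hnpj (hmono i j hij hjn hpi))
  refine ⟨j, hj, ?_⟩
  ext i
  have hSi := Finset.ext_iff.1 hS i
  simp only [Finset.mem_filter, Finset.mem_range, Finset.mem_Ico] at hSi ⊢
  constructor
  · rintro ⟨hin, hpi⟩
    refine ⟨?_, hin⟩
    by_contra hij
    exact (hSi.2 (by omega)).2 hpi
  · rintro ⟨hji, hin⟩
    refine ⟨hin, ?_⟩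
    by_contra hpi
    have := hSi.1 ⟨hin, hpi⟩
    omega

lemma tailSum_le_of_partial (n : ℕ) (α β : ℕ → ℝ) (t : ℝ)
    (hα : ∀ i j : ℕ, i ≤ j → j < n → α j ≤ α i)
    (hpart : ∀ k ≤ n, ∑ i ∈ Finset.range k, α i ≤ ∑ i ∈ Finset.range k, β i) :
    ∑ i ∈ Finset.range n, max (α i - t) 0 ≤ ∑ i ∈ Finset.range n, max (β i - t) 0 := by
  classical
  obtain ⟨j, hj, hS⟩ := filter_eq_range_of_lower n (fun i => t < α i)
    (fun i k hik hkn h => lt_of_lt_of_le h (hα i k hik hkn))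
  have h1 : ∑ i ∈ Finset.range n, max (α i - t) 0
      = ∑ i ∈ Finset.range j, (α i - t) := by
    rw [← hS, Finset.sum_filter]
    refine Finset.sum_congr rfl fun i _ => ?_
    by_cases h : t < α i
    · rw [if_pos h, max_eq_left (by linarith)]
    · rw [if_neg h, max_eq_right (by push_neg at h; linarith)]
  rw [h1]
  calc ∑ i ∈ Finset.range j, (α i - t)
      ≤ ∑ i ∈ Finset.range j, (β i - t) := by
        rw [Finset.sum_sub_distrib, Finset.sum_sub_distrib]
        exact sub_le_sub_right (hpart j hj) _
    _ ≤ ∑ i ∈ Finset.range j, max (β i - t) 0 :=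
        Finset.sum_le_sum fun i _ => le_max_left _ _
    _ ≤ ∑ i ∈ Finset.range n, max (β i - t) 0 :=
        Finset.sum_le_sum_of_subset_of_nonneg
          (Finset.range_subset_range.2 hj) (fun i _ _ => le_max_right _ _)

lemma lowSum_le_of_partial (n : ℕ) (α β : ℕ → ℝ) (t : ℝ)
    (hα : ∀ i j : ℕ, i ≤ j → j < n → α j ≤ α i)
    (hpart : ∀ k ≤ n, ∑ i ∈ Finset.Ico k n, β i ≤ ∑ i ∈ Finset.Ico k n, α i) :
    ∑ i ∈ Finset.range n, max (-t - α i) 0 ≤ ∑ i ∈ Finset.range n, max (-t - β i) 0 := by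
  classical
  obtain ⟨j, hj, hS⟩ := filter_eq_Ico_of_upper n (fun i => α i < -t)
    (fun i k hik hkn h => lt_of_le_of_lt (hα i k hik hkn) h)
  have h1 : ∑ i ∈ Finset.range n, max (-t - α i) 0
      = ∑ i ∈ Finset.Ico j n, (-t - α i) := by
    rw [← hS, Finset.sum_filter]
    refine Finset.sum_congr rfl fun i _ => ?_
    by_cases h : α i < -t
    · rw [if_pos h, max_eq_left (by linarith)]
    · rw [if_neg h, max_eq_right (by push_neg at h; linarith)]
  rw [h1]
  calc ∑ i ∈ Finset.Ico j n, (-t - α i)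
      ≤ ∑ i ∈ Finset.Ico j n, (-t - β i) := by
        rw [Finset.sum_sub_distrib, Finset.sum_sub_distrib]
        exact sub_le_sub_left (hpart j hj) _
    _ ≤ ∑ i ∈ Finset.Ico j n, max (-t - β i) 0 :=
        Finset.sum_le_sum fun i _ => le_max_left _ _
    _ ≤ ∑ i ∈ Finset.range n, max (-t - β i) 0 := by
        rw [Finset.range_eq_Ico]
        exact Finset.sum_le_sum_of_subset_of_nonneg
          (Finset.Ico_subset_Ico (Nat.zero_le j) (le_refl n)) (fun i _ _ => le_max_right _ _)

def tailSet (t : ℝ) : Set ℝ := {s : ℝ | ENNReal.ofReal t < logAbsE s}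

lemma measurableSet_tailSet (t : ℝ) : MeasurableSet (tailSet t) :=
  measurable_logAbsE measurableSet_Ioi

lemma integrable_clampLog (M : ℝ) (hM : 0 ≤ M) (μ : Measure ℝ) [IsFiniteMeasure μ] :
    Integrable (clampLog M) μ :=
  ⟨(continuous_clampLog M).measurable.aestronglyMeasurable,
    HasFiniteIntegral.of_bounded (C := M) (ae_of_all _ fun s => by
      rw [Real.norm_eq_abs]; exact abs_clampLog_le M hM s)⟩

lemma integrable_log_of_lintegral_lt_top {μ : Measure ℝ} (h : ∫⁻ s, logAbsE s ∂μ ≠ ⊤) :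
    Integrable Real.log μ ∧ μ {0} = 0 := by
  have h0 : μ {0} = 0 := by
    by_contra h0
    have hle : ∫⁻ s in {(0:ℝ)}, logAbsE s ∂μ ≤ ∫⁻ s, logAbsE s ∂μ := setLIntegral_le_lintegral _ _
    rw [lintegral_singleton] at hle
    have htop : logAbsE 0 * μ {0} = ⊤ := by
      rw [logAbsE, if_pos rfl]
      exact ENNReal.top_mul h0
    rw [htop, top_le_iff] at hle
    exact h hle
  refine ⟨⟨Real.measurable_log.aestronglyMeasurable, ?_⟩, h0⟩
  rw [hasFiniteIntegral_iff_norm]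
  refine lt_of_le_of_lt (lintegral_mono fun s => ?_) (lt_top_iff_ne_top.2 h)
  rw [Real.norm_eq_abs]
  rcases eq_or_ne s 0 with rfl | hs
  · simp [logAbsE]
  · rw [logAbsE, if_neg hs]

lemma lintegral_ofReal_abs_log_sub_clamp_le {μ : Measure ℝ} (M : ℝ) (hM : 0 ≤ M)
    (h0 : μ {0} = 0) :
    ∫⁻ s, ENNReal.ofReal |Real.log s - clampLog M s| ∂μ
      ≤ 2 * ∫⁻ s in tailSet M, logAbsE s ∂μ := by
  have ha : ∀ᵐ s ∂μ, s ≠ 0 := by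
    rw [ae_iff]
    convert h0 using 2
    ext s; simp
  have key : ∀ s : ℝ, s ≠ 0 → ENNReal.ofReal |Real.log s - clampLog M s|
      ≤ (tailSet M).indicator (fun s => 2 * logAbsE s) s := by
    intro s hs
    by_cases h : |Real.log s| ≤ M
    · rw [clampLog_eq_log M hM hs h, sub_self, abs_zero, ENNReal.ofReal_zero]
      exact zero_le
    · push_neg at h
      have hmem : s ∈ tailSet M := by
        show ENNReal.ofReal M < logAbsE s
        rw [logAbsE, if_neg hs]
        exact (ENNReal.ofReal_lt_ofReal_iff (hM.trans_lt h)).2 h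
      rw [Set.indicator_of_mem hmem]
      have hb : |Real.log s - clampLog M s| ≤ 2 * |Real.log s| := by
        have h1 := abs_clampLog_le M hM s
        have h2 := abs_sub_abs_le_abs_sub (Real.log s) (clampLog M s)
        have h3 := abs_sub (Real.log s) (clampLog M s)
        calc |Real.log s - clampLog M s| ≤ |Real.log s| + |clampLog M s| := abs_sub _ _
          _ ≤ |Real.log s| + M := by linarith
          _ ≤ 2 * |Real.log s| := by linarith
      calc ENNReal.ofReal |Real.log s - clampLog M s| ≤ ENNReal.ofReal (2 * |Real.log s|) :=
            ENNReal.ofReal_le_ofReal hb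
        _ = 2 * logAbsE s := by
            rw [ENNReal.ofReal_mul (by norm_num : (0:ℝ) ≤ 2), logAbsE, if_neg hs]
            norm_num
  calc ∫⁻ s, ENNReal.ofReal |Real.log s - clampLog M s| ∂μ
      ≤ ∫⁻ s, (tailSet M).indicator (fun s => 2 * logAbsE s) s ∂μ :=
        lintegral_mono_ae (ha.mono key)
    _ = ∫⁻ s in tailSet M, 2 * logAbsE s ∂μ :=
        lintegral_indicator (measurableSet_tailSet M) _
    _ = 2 * ∫⁻ s in tailSet M, logAbsE s ∂μ :=
        lintegral_const_mul 2 measurable_logAbsE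

lemma abs_integral_log_sub_clamp_le {μ : Measure ℝ} [IsFiniteMeasure μ] (M : ℝ) (hM : 0 ≤ M)
    (h0 : μ {0} = 0) (hint : Integrable Real.log μ)
    {δ : ℝ} (hδ : 0 ≤ δ) (htail : ∫⁻ s in tailSet M, logAbsE s ∂μ ≤ ENNReal.ofReal δ) :
    |∫ s, Real.log s ∂μ - ∫ s, clampLog M s ∂μ| ≤ 2 * δ := by
  rw [← integral_sub hint (integrable_clampLog M hM μ), ← Real.norm_eq_abs]
  refine le_trans (norm_integral_le_integral_norm _) ?_
  have hmeas : AEStronglyMeasurable (fun s => |Real.log s - clampLog M s|) μ :=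
    ((Real.measurable_log.sub (continuous_clampLog M).measurable).abs).aestronglyMeasurable
  simp only [Real.norm_eq_abs]
  rw [integral_eq_lintegral_of_nonneg_ae (ae_of_all _ fun s => abs_nonneg _) hmeas]
  refine ENNReal.toReal_le_of_le_ofReal (by linarith) ?_
  calc ∫⁻ s, ENNReal.ofReal |Real.log s - clampLog M s| ∂μ
      ≤ 2 * ∫⁻ s in tailSet M, logAbsE s ∂μ := lintegral_ofReal_abs_log_sub_clamp_le M hM h0
    _ ≤ 2 * ENNReal.ofReal δ := by gcongr
    _ = ENNReal.ofReal (2 * δ) := by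
        rw [ENNReal.ofReal_mul (by norm_num : (0:ℝ) ≤ 2)]; norm_num

lemma tendsto_integral_log_of_weak (η : ℕ → Measure ℝ) (m : Measure ℝ) [IsProbabilityMeasure m]
    (hp : ∀ᶠ n in atTop, IsProbabilityMeasure (η n))
    (hw : ∀ f : BoundedContinuousFunction ℝ ℝ,
      Tendsto (fun n => ∫ x, f x ∂(η n)) atTop (𝓝 (∫ x, f x ∂m)))
    (hui : UnifIntLog η) :
    Tendsto (fun n => ∫ t, Real.log t ∂(η n)) atTop (𝓝 (∫ t, Real.log t ∂m)) := by
  -- Step 1: eventual uniform bound on the total lintegrals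
  obtain ⟨t0, ht0, hC⟩ : ∃ t0 : ℝ, 0 ≤ t0 ∧
      ∀ᶠ n in atTop, ∫⁻ s, logAbsE s ∂(η n) ≤ ENNReal.ofReal t0 + 1 := by
    have h1 : ∀ᶠ t : ℝ in atTop,
        limsup (fun n => ∫⁻ s in tailSet t, logAbsE s ∂(η n)) atTop < 1 :=
      hui.eventually_lt_const zero_lt_one
    obtain ⟨t0, ht0, hlim⟩ := ((eventually_ge_atTop (0:ℝ)).and h1).exists
    refine ⟨t0, ht0, ?_⟩
    filter_upwards [eventually_lt_of_limsup_lt hlim, hp] with n hn hpn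
    have hA : ∫⁻ s in (tailSet t0)ᶜ, logAbsE s ∂(η n) ≤ ENNReal.ofReal t0 := by
      refine le_trans (setLIntegral_mono' (measurableSet_tailSet t0).compl
        (fun s hs => not_lt.1 hs)) ?_
      rw [setLIntegral_const]
      calc ENNReal.ofReal t0 * (η n) (tailSet t0)ᶜ ≤ ENNReal.ofReal t0 * 1 := by
            gcongr; exact prob_le_one
        _ = ENNReal.ofReal t0 := mul_one _
    calc ∫⁻ s, logAbsE s ∂(η n)
        = ∫⁻ s in tailSet t0, logAbsE s ∂(η n) + ∫⁻ s in (tailSet t0)ᶜ, logAbsE s ∂(η n) :=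
          (lintegral_add_compl logAbsE (measurableSet_tailSet t0)).symm
      _ ≤ 1 + ENNReal.ofReal t0 := add_le_add hn.le hA
      _ = ENNReal.ofReal t0 + 1 := add_comm _ _
  set C : ℝ≥0∞ := ENNReal.ofReal t0 + 1 with hCdef
  have hCne : C ≠ ⊤ := by simp [hCdef]
  -- Step 2: the lintegral of logAbsE against m is bounded by C
  have hmC : ∫⁻ s, logAbsE s ∂m ≤ C := by
    have key : ∀ M : ℕ, ∫⁻ s, (logAbsE s ⊓ (M : ℝ≥0∞)) ∂m ≤ C := by
      intro M
      have hM : (0:ℝ) ≤ (M:ℝ) := Nat.cast_nonneg M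
      -- bounded continuous |clampLog M|
      set gA : BoundedContinuousFunction ℝ ℝ :=
        BoundedContinuousFunction.ofNormedAddCommGroup (fun s => |clampLog (M:ℝ) s|)
          ((continuous_clampLog (M:ℝ)).abs) (M:ℝ)
          (fun s => by rw [Real.norm_eq_abs, abs_abs]; exact abs_clampLog_le _ hM s)
        with hgA
      have hgA_apply : ∀ s, gA s = |clampLog (M:ℝ) s| := fun s => rfl
      have hofReal : ∀ (μ' : Measure ℝ) [IsProbabilityMeasure μ'],
          ENNReal.ofReal (∫ s, gA s ∂μ') = ∫⁻ s, (logAbsE s ⊓ (M : ℝ≥0∞)) ∂μ' := by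
        intro μ' hμ'
        rw [ofReal_integral_eq_lintegral_ofReal (gA.integrable μ')
          (ae_of_all _ fun s => by rw [hgA_apply]; exact abs_nonneg _)]
        refine lintegral_congr fun s => ?_
        rw [hgA_apply, ofReal_abs_clampLog _ hM s, ENNReal.ofReal_natCast]
      have hev : ∀ᶠ n in atTop, ∫ s, gA s ∂(η n) ≤ C.toReal := by
        filter_upwards [hC, hp] with n hn hpn
        have h1 : ENNReal.ofReal (∫ s, gA s ∂(η n)) ≤ C := by
          rw [hofReal (η n)]
          exact le_trans (lintegral_mono fun s => inf_le_left) hn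
        exact (ENNReal.ofReal_le_iff_le_toReal hCne).1 h1
      have hlim : ∫ s, gA s ∂m ≤ C.toReal := le_of_tendsto (hw gA) hev
      calc ∫⁻ s, (logAbsE s ⊓ (M : ℝ≥0∞)) ∂m = ENNReal.ofReal (∫ s, gA s ∂m) :=
            (hofReal m).symm
        _ ≤ ENNReal.ofReal C.toReal := ENNReal.ofReal_le_ofReal hlim
        _ = C := ENNReal.ofReal_toReal hCne
    have hsup : ∫⁻ s, logAbsE s ∂m = ⨆ M : ℕ, ∫⁻ s, (logAbsE s ⊓ (M : ℝ≥0∞)) ∂m := by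
      rw [← lintegral_iSup (fun M => measurable_logAbsE.min measurable_const)
        (fun M N hMN s => inf_le_inf_left _ (by exact_mod_cast Nat.cast_le.2 hMN))]
      exact lintegral_congr fun s => (iSup_inf_natCast (logAbsE s)).symm
    rw [hsup]
    exact iSup_le key
  obtain ⟨hmint, hm0⟩ := integrable_log_of_lintegral_lt_top (ne_top_of_le_ne_top hCne hmC)
  -- Step 3: DCT for the tails of m
  have hDCT : Tendsto (fun M : ℕ => ∫⁻ s in tailSet (M:ℝ), logAbsE s ∂m) atTop (𝓝 0) := by
    have heq : ∀ M : ℕ, ∫⁻ s in tailSet (M:ℝ), logAbsE s ∂m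
        = ∫⁻ s, (tailSet (M:ℝ)).indicator logAbsE s ∂m :=
      fun M => (lintegral_indicator (measurableSet_tailSet _) _).symm
    simp only [heq]
    have h0 : (0:ℝ≥0∞) = ∫⁻ s, (0 : ℝ → ℝ≥0∞) s ∂m := by simp
    rw [h0]
    refine tendsto_lintegral_of_dominated_convergence logAbsE
      (fun M => measurable_logAbsE.indicator (measurableSet_tailSet _)) ?_ ?_ ?_
    · exact fun M => ae_of_all _ fun s => Set.indicator_le_self _ _ s
    · exact ne_top_of_le_ne_top hCne hmC
    · have hfin : ∀ᵐ s ∂m, logAbsE s ≠ ⊤ := by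
        filter_upwards [ae_lt_top measurable_logAbsE (ne_top_of_le_ne_top hCne hmC)] with s hs
        exact hs.ne
      filter_upwards [hfin] with s hs
      obtain ⟨N, hN⟩ := ENNReal.exists_nat_gt hs
      refine tendsto_const_nhds.congr' ?_
      filter_upwards [eventually_ge_atTop N] with M hM
      have : s ∉ tailSet (M:ℝ) := by
        show ¬ (ENNReal.ofReal (M:ℝ) < logAbsE s)
        rw [ENNReal.ofReal_natCast, not_lt]
        exact le_trans hN.le (by exact_mod_cast Nat.cast_le.2 hM)
      rw [Set.indicator_of_notMem this]
      rfl
  -- Step 4: the ε-argument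
  rw [Metric.tendsto_atTop]
  intro ε hε
  have hε8 : 0 < ε / 8 := by linarith
  -- pick M
  have hM1 : ∀ᶠ M : ℕ in atTop,
      limsup (fun n => ∫⁻ s in tailSet (M:ℝ), logAbsE s ∂(η n)) atTop
        < ENNReal.ofReal (ε/8) :=
    (tendsto_natCast_atTop_atTop.eventually
      (hui.eventually_lt_const (by simp [hε8] : (0:ℝ≥0∞) < ENNReal.ofReal (ε/8))))
  have hM2 : ∀ᶠ M : ℕ in atTop,
      ∫⁻ s in tailSet (M:ℝ), logAbsE s ∂m < ENNReal.ofReal (ε/8) :=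
    hDCT.eventually_lt_const (by simp [hε8])
  obtain ⟨M, hM1, hM2⟩ := (hM1.and hM2).exists
  have hMnn : (0:ℝ) ≤ (M:ℝ) := Nat.cast_nonneg M
  -- the clamp as a bounded continuous function
  set g : BoundedContinuousFunction ℝ ℝ :=
    BoundedContinuousFunction.ofNormedAddCommGroup (clampLog (M:ℝ))
      (continuous_clampLog (M:ℝ)) (M:ℝ)
      (fun s => by rw [Real.norm_eq_abs]; exact abs_clampLog_le _ hMnn s) with hg
  have hg_apply : ∀ s, g s = clampLog (M:ℝ) s := fun s => rfl
  have hBm : |∫ s, Real.log s ∂m - ∫ s, clampLog (M:ℝ) s ∂m| ≤ 2 * (ε/8) :=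
    abs_integral_log_sub_clamp_le (M:ℝ) hMnn hm0 hmint hε8.le hM2.le
  have hev1 : ∀ᶠ n in atTop,
      |∫ s, Real.log s ∂(η n) - ∫ s, clampLog (M:ℝ) s ∂(η n)| ≤ 2 * (ε/8) := by
    filter_upwards [eventually_lt_of_limsup_lt hM1, hC, hp] with n hn hCn hpn
    obtain ⟨hint, h0⟩ := integrable_log_of_lintegral_lt_top (ne_top_of_le_ne_top hCne hCn)
    exact abs_integral_log_sub_clamp_le (M:ℝ) hMnn h0 hint hε8.le hn.le
  have hev2 : ∀ᶠ n in atTop,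
      |∫ s, clampLog (M:ℝ) s ∂(η n) - ∫ s, clampLog (M:ℝ) s ∂m| < ε/4 := by
    have := (hw g).eventually (Metric.ball_mem_nhds (∫ x, g x ∂m) (by linarith : (0:ℝ) < ε/4))
    filter_upwards [this] with n hn
    simpa [Real.dist_eq, hg_apply] using hn
  obtain ⟨N, hN⟩ := (hev1.and hev2).exists_forall_of_atTop
  refine ⟨N, fun n hn => ?_⟩
  obtain ⟨h1, h2⟩ := hN n hn
  rw [Real.dist_eq]
  calc |∫ s, Real.log s ∂(η n) - ∫ s, Real.log s ∂m|
      ≤ |∫ s, Real.log s ∂(η n) - ∫ s, clampLog (M:ℝ) s ∂(η n)|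
        + |∫ s, clampLog (M:ℝ) s ∂(η n) - ∫ s, Real.log s ∂m| := abs_sub_le _ _ _
    _ ≤ |∫ s, Real.log s ∂(η n) - ∫ s, clampLog (M:ℝ) s ∂(η n)|
        + (|∫ s, clampLog (M:ℝ) s ∂(η n) - ∫ s, clampLog (M:ℝ) s ∂m|
          + |∫ s, clampLog (M:ℝ) s ∂m - ∫ s, Real.log s ∂m|) := by
        gcongr
        exact abs_sub_le _ _ _
    _ < ε := by
        have hBm' : |∫ s, clampLog (M:ℝ) s ∂m - ∫ s, Real.log s ∂m| ≤ 2 * (ε/8) := by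
          rw [abs_sub_comm]; exact hBm
        linarith

/-- tail lintegral of an empirical measure with nonvanishing atoms, as a real sum. -/
lemma tail_empMeas (f : ℕ → ℝ) (n : ℕ) (hf : ∀ k < n, f k ≠ 0) (t : ℝ) (ht : 0 ≤ t) :
    ∫⁻ s in tailSet t, logAbsE s ∂(empMeas f n)
      = (n : ℝ≥0∞)⁻¹ * ENNReal.ofReal
          (∑ k ∈ Finset.range n, if t < |Real.log (f k)| then |Real.log (f k)| else 0) := by
  rw [← lintegral_indicator (measurableSet_tailSet t), lintegral_empMeas]
  congr 1
  rw [ENNReal.ofReal_sum_of_nonneg (fun k _ => by positivity)]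
  refine Finset.sum_congr rfl fun k hk => ?_
  have hfk := hf k (Finset.mem_range.1 hk)
  by_cases h : t < |Real.log (f k)|
  · rw [if_pos h, Set.indicator_of_mem, logAbsE, if_neg hfk]
    show ENNReal.ofReal t < logAbsE (f k)
    rw [logAbsE, if_neg hfk]
    exact (ENNReal.ofReal_lt_ofReal_iff_of_nonneg ht).2 h
  · rw [if_neg h, Set.indicator_of_notMem, ENNReal.ofReal_zero]
    show ¬ (ENNReal.ofReal t < logAbsE (f k))
    rw [logAbsE, if_neg hfk, not_lt]
    exact ENNReal.ofReal_le_ofReal (not_lt.1 h)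

/-- pointwise ingredient (A) -/
lemma tail_le_maxes (t x : ℝ) (ht : 0 < t) :
    (if t < |x| then |x| else 0) ≤ 2 * (max (x - t/2) 0 + max (-(t/2) - x) 0) := by
  by_cases h : t < |x|
  · rw [if_pos h]
    rcases abs_cases x with ⟨he, _⟩ | ⟨he, _⟩
    · have h1 := le_max_left (x - t/2) (0:ℝ)
      have h2 := le_max_right (-(t/2) - x) (0:ℝ)
      linarith
    · have h1 := le_max_right (x - t/2) (0:ℝ)
      have h2 := le_max_left (-(t/2) - x) (0:ℝ)
      linarith
  · rw [if_neg h]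
    have h1 := le_max_right (x - t/2) (0:ℝ)
    have h2 := le_max_right (-(t/2) - x) (0:ℝ)
    linarith

/-- pointwise ingredient (B) -/
lemma maxes_le_tail (s x : ℝ) (hs : 0 < s) :
    max (x - s) 0 + max (-s - x) 0 ≤ (if s < |x| then |x| else 0) := by
  by_cases h : s < |x|
  · rw [if_pos h]
    rcases le_total 0 x with hx | hx
    · rw [max_eq_right (by linarith : -s - x ≤ 0)]
      rw [abs_of_nonneg hx]
      have := max_le (by linarith : x - s ≤ x) hx
      linarith
    · rw [max_eq_right (by linarith : x - s ≤ 0)]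
      rw [abs_of_nonpos hx]
      have := max_le (by linarith : -s - x ≤ -x) (by linarith : (0:ℝ) ≤ -x)
      linarith
  · rw [if_neg h]
    push_neg at h
    have ha := abs_le.1 h
    rw [max_eq_right (by linarith), max_eq_right (by linarith)]
    norm_num

/-- The key comparison of tail sums under majorization. -/
lemma tail_sum_comparison (n : ℕ) (α β : ℕ → ℝ) (t : ℝ) (ht : 0 < t)
    (hα : ∀ i j : ℕ, i ≤ j → j < n → α j ≤ α i)
    (h1 : ∀ k ≤ n, ∑ i ∈ Finset.range k, α i ≤ ∑ i ∈ Finset.range k, β i)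
    (h2 : ∀ k ≤ n, ∑ i ∈ Finset.Ico k n, β i ≤ ∑ i ∈ Finset.Ico k n, α i) :
    ∑ k ∈ Finset.range n, (if t < |α k| then |α k| else 0)
      ≤ 2 * ∑ k ∈ Finset.range n, (if t/2 < |β k| then |β k| else 0) := by
  have hs : 0 < t/2 := by linarith
  calc ∑ k ∈ Finset.range n, (if t < |α k| then |α k| else 0)
      ≤ ∑ k ∈ Finset.range n, 2 * (max (α k - t/2) 0 + max (-(t/2) - α k) 0) :=
        Finset.sum_le_sum fun k _ => tail_le_maxes t (α k) ht
    _ = 2 * ((∑ k ∈ Finset.range n, max (α k - t/2) 0)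
          + ∑ k ∈ Finset.range n, max (-(t/2) - α k) 0) := by
        rw [← Finset.mul_sum, Finset.sum_add_distrib]
    _ ≤ 2 * ((∑ k ∈ Finset.range n, max (β k - t/2) 0)
          + ∑ k ∈ Finset.range n, max (-(t/2) - β k) 0) := by
        have hA := tailSum_le_of_partial n α β (t/2) hα h1
        have hB := lowSum_le_of_partial n α β (t/2) hα h2
        linarith
    _ ≤ 2 * ∑ k ∈ Finset.range n, (if t/2 < |β k| then |β k| else 0) := by
        have := Finset.sum_le_sum (f := fun k => max (β k - t/2) 0 + max (-(t/2) - β k) 0)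
          (g := fun k => if t/2 < |β k| then |β k| else 0) (s := Finset.range n)
          (fun k _ => maxes_le_tail (t/2) (β k) hs)
        rw [Finset.sum_add_distrib] at this
        linarith


lemma zero_mem_tailSet (t : ℝ) : (0:ℝ) ∈ tailSet t := by
  show ENNReal.ofReal t < logAbsE 0
  rw [logAbsE, if_pos rfl]
  exact ENNReal.ofReal_lt_top

lemma ne_zero_of_tail_lt_top (f : ℕ → ℝ) (n : ℕ) (t : ℝ)
    (h : ∫⁻ s in tailSet t, logAbsE s ∂(empMeas f n) ≠ ⊤) : ∀ k < n, f k ≠ 0 := by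
  intro k hk hfk
  apply h
  rw [← lintegral_indicator (measurableSet_tailSet t), lintegral_empMeas]
  have hterm : (tailSet t).indicator logAbsE (f k) = ⊤ := by
    rw [hfk, Set.indicator_of_mem (zero_mem_tailSet t), logAbsE, if_pos rfl]
  have hsum : (∑ i ∈ Finset.range n, (tailSet t).indicator logAbsE (f i)) = ⊤ := by
    refine eq_top_iff.2 ?_
    rw [← hterm]
    exact Finset.single_le_sum (f := fun i => (tailSet t).indicator logAbsE (f i)) (fun i _ => zero_le) (Finset.mem_range.2 hk)
  rw [hsum]
  exact ENNReal.mul_top (ENNReal.inv_ne_zero.2 (ENNReal.natCast_ne_top n))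

lemma empMeas_apply (f : ℕ → ℝ) (n : ℕ) (S : Set ℝ) :
    empMeas f n S = (n : ℝ≥0∞)⁻¹ * ∑ k ∈ Finset.range n, (Measure.dirac (f k)) S := by
  rw [empMeas]
  simp [Measure.smul_apply, Measure.coe_finset_sum, Finset.sum_apply, smul_eq_mul]

/-- Logarithmic majorization and uniform integrability: given two nonnegative triangular arrays
`a`, `b` (0-based indexing, row `n` has entries `a n 0, …, a n (n-1)`), nonincreasing for `n ≫ 1`,
whose partial products from the top are majorized by those of `b` and partial products from the
bottom dominate those of `b`, if the empirical measures `ν_n` of `b` converge weakly to a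
probability measure `ν` with `log` uniformly integrable, then the empirical measures `μ_n` of `a`
are tight, `log` is uniformly integrable for them, `∫ log dμ_n = ∫ log dν_n → ∫ log dν`, and
every weak adherence value `m` of `(μ_n)` satisfies `∫ log dm = ∫ log dν`. -/
theorem log_majorization_uniform_integrability
    (a b : ℕ → ℕ → ℝ) (ν : Measure ℝ) [IsProbabilityMeasure ν]
    (ha_nonneg : ∀ n k, k < n → 0 ≤ a n k) (hb_nonneg : ∀ n k, k < n → 0 ≤ b n k)
    (h_mono : ∀ᶠ n in atTop,
      (∀ i j : ℕ, i ≤ j → j < n → a n j ≤ a n i) ∧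
      (∀ i j : ℕ, i ≤ j → j < n → b n j ≤ b n i))
    (h_prod_le : ∀ᶠ n in atTop, ∀ k ≤ n,
      ∏ i ∈ Finset.range k, a n i ≤ ∏ i ∈ Finset.range k, b n i)
    (h_prod_ge : ∀ᶠ n in atTop, ∀ k < n,
      ∏ i ∈ Finset.Ico k n, b n i ≤ ∏ i ∈ Finset.Ico k n, a n i)
    (h_weak : ∀ f : BoundedContinuousFunction ℝ ℝ,
      Tendsto (fun n => ∫ x, f x ∂(empMeas (b n) n)) atTop (𝓝 (∫ x, f x ∂ν)))
    (h_ui : UnifIntLog (fun n => empMeas (b n) n)) :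
    (∀ ε : ℝ, 0 < ε → ∃ r : ℝ, ∀ n : ℕ,
      (empMeas (a n) n) {x : ℝ | r < |x|} ≤ ENNReal.ofReal ε) ∧
    UnifIntLog (fun n => empMeas (a n) n) ∧
    ((∀ᶠ n in atTop,
        ∫ t, Real.log t ∂(empMeas (a n) n) = ∫ t, Real.log t ∂(empMeas (b n) n)) ∧
      Tendsto (fun n => ∫ t, Real.log t ∂(empMeas (a n) n)) atTop
        (𝓝 (∫ t, Real.log t ∂ν))) ∧
    (∀ m : Measure ℝ, IsProbabilityMeasure m →
      (∃ φ : ℕ → ℕ, StrictMono φ ∧ ∀ f : BoundedContinuousFunction ℝ ℝ,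
        Tendsto (fun j => ∫ x, f x ∂(empMeas (a (φ j)) (φ j))) atTop (𝓝 (∫ x, f x ∂m))) →
      ∫ t, Real.log t ∂m = ∫ t, Real.log t ∂ν) := by

  -- eventual non-vanishing of `b`
  have hbne : ∀ᶠ n in atTop, ∀ k < n, b n k ≠ 0 := by
    obtain ⟨t1, hlt⟩ := (h_ui.eventually_lt_const zero_lt_one).exists
    filter_upwards [eventually_lt_of_limsup_lt hlt] with n hn
    exact ne_zero_of_tail_lt_top (b n) n t1 (hn.trans ENNReal.one_lt_top).ne
  -- package of eventual structural facts
  have hPack : ∀ᶠ n in atTop,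
      (∀ k < n, 0 < a n k) ∧ (∀ k < n, 0 < b n k) ∧
      (∀ i j : ℕ, i ≤ j → j < n → Real.log (a n j) ≤ Real.log (a n i)) ∧
      (∀ k ≤ n, ∑ i ∈ Finset.range k, Real.log (a n i)
          ≤ ∑ i ∈ Finset.range k, Real.log (b n i)) ∧
      (∀ k ≤ n, ∑ i ∈ Finset.Ico k n, Real.log (b n i)
          ≤ ∑ i ∈ Finset.Ico k n, Real.log (a n i)) ∧
      (∑ i ∈ Finset.range n, Real.log (a n i) = ∑ i ∈ Finset.range n, Real.log (b n i)) := by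
    filter_upwards [h_mono, h_prod_le, h_prod_ge, hbne] with n hmono hple hpge hbne'
    obtain ⟨hamono, _⟩ := hmono
    have hbpos : ∀ k < n, 0 < b n k :=
      fun k hk => (hb_nonneg n k hk).lt_of_ne (Ne.symm (hbne' k hk))
    have hapos : ∀ k < n, 0 < a n k := by
      intro k hk
      have hn1 : n - 1 < n := by omega
      have hIco : Finset.Ico (n-1) n = {n-1} := by
        rw [show n = (n-1)+1 by omega]
        simp
      have h1 : b n (n-1) ≤ a n (n-1) := by
        have := hpge (n-1) hn1
        rwa [hIco, Finset.prod_singleton, Finset.prod_singleton] at this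
      have h2 : a n (n-1) ≤ a n k := hamono k (n-1) (by omega) hn1
      exact lt_of_lt_of_le (lt_of_lt_of_le (hbpos (n-1) hn1) h1) h2
    have hlogmono : ∀ i j : ℕ, i ≤ j → j < n → Real.log (a n j) ≤ Real.log (a n i) :=
      fun i j hij hjn => Real.log_le_log (hapos j hjn) (hamono i j hij hjn)
    have hsumle : ∀ k ≤ n, ∑ i ∈ Finset.range k, Real.log (a n i)
        ≤ ∑ i ∈ Finset.range k, Real.log (b n i) := by
      intro k hk
      rw [← Real.log_prod (fun i hi =>
            (hapos i (lt_of_lt_of_le (Finset.mem_range.1 hi) hk)).ne'),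
          ← Real.log_prod (fun i hi =>
            (hbpos i (lt_of_lt_of_le (Finset.mem_range.1 hi) hk)).ne')]
      exact Real.log_le_log (Finset.prod_pos fun i hi =>
        hapos i (lt_of_lt_of_le (Finset.mem_range.1 hi) hk)) (hple k hk)
    have hsumge : ∀ k ≤ n, ∑ i ∈ Finset.Ico k n, Real.log (b n i)
        ≤ ∑ i ∈ Finset.Ico k n, Real.log (a n i) := by
      intro k hk
      rcases eq_or_lt_of_le hk with rfl | hk'
      · simp
      · rw [← Real.log_prod (fun i hi => (hbpos i (Finset.mem_Ico.1 hi).2).ne'),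
            ← Real.log_prod (fun i hi => (hapos i (Finset.mem_Ico.1 hi).2).ne')]
        exact Real.log_le_log (Finset.prod_pos fun i hi =>
          hbpos i (Finset.mem_Ico.1 hi).2) (hpge k hk')
    have htot : ∑ i ∈ Finset.range n, Real.log (a n i)
        = ∑ i ∈ Finset.range n, Real.log (b n i) := by
      refine le_antisymm (hsumle n le_rfl) ?_
      have := hsumge 0 (Nat.zero_le n)
      rwa [← Finset.range_eq_Ico] at this
    exact ⟨hapos, hbpos, hlogmono, hsumle, hsumge, htot⟩
  -- equality of the integrals of log
  have hEq : ∀ᶠ n in atTop, ∫ t, Real.log t ∂(empMeas (a n) n)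
      = ∫ t, Real.log t ∂(empMeas (b n) n) := by
    filter_upwards [hPack] with n hn
    rw [integral_empMeas, integral_empMeas, hn.2.2.2.2.2]
  -- comparison of tails
  have hcomp : ∀ t : ℝ, 0 < t → ∀ᶠ n in atTop,
      ∫⁻ s in tailSet t, logAbsE s ∂(empMeas (a n) n)
        ≤ 2 * ∫⁻ s in tailSet (t/2), logAbsE s ∂(empMeas (b n) n) := by
    intro t ht
    filter_upwards [hPack, hbne] with n hn hbne'
    obtain ⟨hapos, hbpos, hlogmono, hsumle, hsumge, _⟩ := hn
    rw [tail_empMeas (a n) n (fun k hk => (hapos k hk).ne') t ht.le,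
        tail_empMeas (b n) n hbne' (t/2) (by linarith)]
    have hcmp := tail_sum_comparison n (fun i => Real.log (a n i))
      (fun i => Real.log (b n i)) t ht hlogmono hsumle hsumge
    refine le_trans (mul_le_mul_right (ENNReal.ofReal_le_ofReal hcmp) _) (le_of_eq ?_)
    rw [ENNReal.ofReal_mul (by norm_num : (0:ℝ) ≤ 2), ENNReal.ofReal_ofNat]
    ring
  -- uniform integrability for μ
  have hUIμ : UnifIntLog (fun n => empMeas (a n) n) := by
    have hhalf : Tendsto (fun t : ℝ => t/2) atTop atTop :=
      Tendsto.atTop_div_const two_pos tendsto_id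
    have hupper : Tendsto (fun t : ℝ => 2 * limsup (fun n =>
        ∫⁻ s in tailSet (t/2), logAbsE s ∂(empMeas (b n) n)) atTop) atTop (𝓝 0) := by
      have h2 := ENNReal.Tendsto.const_mul (h_ui.comp hhalf)
        (Or.inr (by norm_num : (2:ℝ≥0∞) ≠ ⊤))
      simpa [tailSet] using h2
    refine tendsto_of_tendsto_of_tendsto_of_le_of_le' tendsto_const_nhds hupper
      (Eventually.of_forall fun t => zero_le) ?_
    filter_upwards [eventually_gt_atTop (0:ℝ)] with t ht
    refine le_trans (limsup_le_limsup (hcomp t ht)) (le_of_eq ?_)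
    exact ENNReal.limsup_const_mul_of_ne_top (by norm_num : (2:ℝ≥0∞) ≠ ⊤)
  -- convergence of ∫ log dν_n and dμ_n
  have hνlim : Tendsto (fun n => ∫ t, Real.log t ∂(empMeas (b n) n)) atTop
      (𝓝 (∫ t, Real.log t ∂ν)) := by
    refine tendsto_integral_log_of_weak _ ν ?_ h_weak h_ui
    filter_upwards [eventually_ge_atTop 1] with n hn
    exact isProbabilityMeasure_empMeas (b n) n (by omega)
  have hμlim : Tendsto (fun n => ∫ t, Real.log t ∂(empMeas (a n) n)) atTop
      (𝓝 (∫ t, Real.log t ∂ν)) := hνlim.congr' (hEq.mono fun n h => h.symm)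
  refine ⟨?_, hUIμ, ⟨hEq, hμlim⟩, ?_⟩
  · -- tightness
    intro ε hε
    obtain ⟨T, hT1, hTlim⟩ : ∃ T : ℝ, 1 ≤ T ∧ limsup (fun n =>
        ∫⁻ s in tailSet T, logAbsE s ∂(empMeas (a n) n)) atTop < ENNReal.ofReal ε := by
      obtain ⟨T, hT⟩ := ((eventually_ge_atTop (1:ℝ)).and
        (hUIμ.eventually_lt_const (ENNReal.ofReal_pos.2 hε))).exists
      exact ⟨T, hT.1, hT.2⟩
    obtain ⟨N, hN⟩ := eventually_atTop.1 (eventually_lt_of_limsup_lt hTlim)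
    set r0 : ℝ := (((Finset.range N).sup fun n =>
      (Finset.range n).sup fun k => ⌈|a n k|⌉₊ : ℕ) : ℝ) with hr0def
    have hr0 : ∀ n < N, ∀ k < n, |a n k| ≤ r0 := by
      intro n hn k hk
      refine le_trans (Nat.le_ceil _) ?_
      have hA : ⌈|a n k|⌉₊ ≤ (Finset.range n).sup (fun k => ⌈|a n k|⌉₊) :=
        Finset.le_sup (f := fun k => ⌈|a n k|⌉₊) (Finset.mem_range.2 hk)
      have hB : (Finset.range n).sup (fun k => ⌈|a n k|⌉₊)
          ≤ (Finset.range N).sup (fun n => (Finset.range n).sup fun k => ⌈|a n k|⌉₊) :=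
        Finset.le_sup (f := fun n => (Finset.range n).sup fun k => ⌈|a n k|⌉₊)
          (Finset.mem_range.2 hn)
      rw [hr0def]
      exact_mod_cast hA.trans hB
    refine ⟨max (Real.exp T) r0, fun n => ?_⟩
    rcases lt_or_ge n N with hn | hn
    · have hz : empMeas (a n) n {x : ℝ | max (Real.exp T) r0 < |x|} = 0 := by
        rw [empMeas_apply]
        have hzero : ∀ k ∈ Finset.range n,
            Measure.dirac (a n k) {x : ℝ | max (Real.exp T) r0 < |x|} = 0 := by
          intro k hk
          rw [Measure.dirac_apply]
          refine Set.indicator_of_notMem ?_ _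
          show ¬ (max (Real.exp T) r0 < |a n k|)
          exact not_lt.2 (le_trans (hr0 n hn k (Finset.mem_range.1 hk)) (le_max_right _ _))
        rw [Finset.sum_congr rfl hzero]
        simp
      rw [hz]
      exact zero_le
    · have hsub2 : {x : ℝ | Real.exp T < |x|} ⊆ tailSet T := by
        intro x hx
        have hax : Real.exp T < |x| := hx
        have hx0 : x ≠ 0 := by
          intro h
          rw [h, abs_zero] at hax
          exact absurd hax (not_lt.2 (Real.exp_pos T).le)
        show ENNReal.ofReal T < logAbsE x
        rw [logAbsE, if_neg hx0]
        refine (ENNReal.ofReal_lt_ofReal_iff_of_nonneg (by linarith)).2 ?_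
        have hlog : T < Real.log |x| := by
          have := Real.log_lt_log (Real.exp_pos T) hax
          rwa [Real.log_exp] at this
        calc T < Real.log |x| := hlog
          _ = Real.log x := Real.log_abs x
          _ ≤ |Real.log x| := le_abs_self _
      have hmark : empMeas (a n) n (tailSet T) ≤ ENNReal.ofReal ε := by
        have h1 : ENNReal.ofReal T * empMeas (a n) n (tailSet T)
            ≤ ∫⁻ s in tailSet T, logAbsE s ∂(empMeas (a n) n) := by
          rw [← setLIntegral_const]
          exact setLIntegral_mono' (measurableSet_tailSet T) (fun s hs => le_of_lt hs)
        have h2 : empMeas (a n) n (tailSet T) ≤ ENNReal.ofReal T * empMeas (a n) n (tailSet T) :=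
          le_mul_of_one_le_left (zero_le) (ENNReal.one_le_ofReal.2 hT1)
        exact le_trans h2 (le_trans h1 (hN n hn).le)
      refine le_trans (measure_mono ?_) hmark
      exact fun x hx => hsub2 (show Real.exp T < |x| from lt_of_le_of_lt (le_max_left _ _) hx)
  · -- adherence values
    rintro m hm ⟨φ, hφ, hwφ⟩
    have hp' : ∀ᶠ j in atTop, IsProbabilityMeasure (empMeas (a (φ j)) (φ j)) := by
      filter_upwards [eventually_ge_atTop 1] with j hj
      have hj2 : j ≤ φ j := hφ.le_apply
      exact isProbabilityMeasure_empMeas _ _ (by omega)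
    have hui' : UnifIntLog (fun j => empMeas (a (φ j)) (φ j)) := by
      refine tendsto_of_tendsto_of_tendsto_of_le_of_le tendsto_const_nhds hUIμ
        (fun t => zero_le) ?_
      intro t
      refine le_trans (le_of_eq (limsup_comp (fun n =>
        ∫⁻ s in {s : ℝ | ENNReal.ofReal t < logAbsE s}, logAbsE s
          ∂(empMeas (a n) n)) φ atTop)) ?_
      exact limsup_le_limsup_of_le hφ.tendsto_atTop
    have h1 := tendsto_integral_log_of_weak (fun j => empMeas (a (φ j)) (φ j)) m hp' hwφ hui'
    have h2 : Tendsto (fun j => ∫ t, Real.log t ∂(empMeas (a (φ j)) (φ j))) atTop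
        (𝓝 (∫ t, Real.log t ∂ν)) := hμlim.comp hφ.tendsto_atTop
    exact tendsto_nhds_unique h1 h2
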